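/- For integers m₁ > m₂ ≥ 1, one has ‖2^{m₁}‖₂ = m₁ and ‖2^{m₁} + 2^{m₂}‖₂ = m₁ + 1, where ‖·‖₂ denotes 2-complexity. -/

import Mathlib

/-- `CanRepr l n m` means `n` can be expressed using exactly `m` copies of `l`
    combined with addition and multiplication (and parentheses). -/
inductive CanRepr (l : ℕ) : ℕ → ℕ → Prop
  | base : CanRepr l l 1
  | add {a b p q : ℕ} : CanRepr l a p → CanRepr l b q → CanRepr l (a + b) (p + q)
  | mul {a b p q : ℕ} : CanRepr l a p → CanRepr l b q → CanRepr l (a * b) (p + q)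

/-- The `l`-complexity `‖n‖_l`: the minimal number of `l`'s needed to express `n`
    using only addition and multiplication. (By convention `sInf ∅ = 0`.) -/
noncomputable def complexity (l n : ℕ) : ℕ := sInf {m | CanRepr l n m}

lemma canRepr_pos {n m : ℕ} (h : CanRepr 2 n m) : 1 ≤ m := by
  induction h with
  | base => exact le_refl 1
  | add _ _ ih1 ih2 => omega
  | mul _ _ ih1 ih2 => omega

lemma canRepr_le {n m : ℕ} (h : CanRepr 2 n m) : n ≤ 2 ^ m := by
  induction h with
  | base => simp
  | @add a b p q h1 h2 ih1 ih2 =>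
    have hp := canRepr_pos h1
    have hq := canRepr_pos h2
    have h2p : 2 ≤ 2 ^ p := by calc 2 = 2 ^ 1 := rfl
                                   _ ≤ 2 ^ p := Nat.pow_le_pow_right (by norm_num) hp
    have h2q : 2 ≤ 2 ^ q := by calc 2 = 2 ^ 1 := rfl
                                   _ ≤ 2 ^ q := Nat.pow_le_pow_right (by norm_num) hq
    calc a + b ≤ 2 ^ p + 2 ^ q := Nat.add_le_add ih1 ih2
      _ ≤ 2 ^ p * 2 ^ q := Nat.add_le_mul h2p h2q
      _ = 2 ^ (p + q) := (pow_add 2 p q).symm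
  | @mul a b p q h1 h2 ih1 ih2 =>
    calc a * b ≤ 2 ^ p * 2 ^ q := Nat.mul_le_mul ih1 ih2
      _ = 2 ^ (p + q) := (pow_add 2 p q).symm

lemma canRepr_pow {m : ℕ} (hm : 1 ≤ m) : CanRepr 2 (2 ^ m) m := by
  induction m with
  | zero => omega
  | succ k ih =>
    rcases Nat.eq_or_lt_of_le hm with h | h
    · have : k = 0 := by omega
      subst this
      simpa using CanRepr.base
    · have hk : 1 ≤ k := by omega
      have := CanRepr.mul (ih hk) CanRepr.base
      simpa [pow_succ] using this

lemma canRepr_mul_pow {a p : ℕ} (k : ℕ) (h : CanRepr 2 a p) :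
    CanRepr 2 (2 ^ k * a) (k + p) := by
  induction k with
  | zero => simpa using h
  | succ j ih =>
    have := CanRepr.mul CanRepr.base ih
    have heq : 2 * (2 ^ j * a) = 2 ^ (j + 1) * a := by ring
    have heq2 : 1 + (j + p) = j + 1 + p := by ring
    rw [heq, heq2] at this
    exact this

theorem stmt_5 (m₁ m₂ : ℕ) (h : m₂ < m₁) (h' : 1 ≤ m₂) :
    complexity 2 (2 ^ m₁) = m₁ ∧ complexity 2 (2 ^ m₁ + 2 ^ m₂) = m₁ + 1 := by
  constructor
  · have hmem : m₁ ∈ {m | CanRepr 2 (2 ^ m₁) m} := canRepr_pow (by omega)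
    have hne : {m | CanRepr 2 (2 ^ m₁) m}.Nonempty := ⟨m₁, hmem⟩
    have hle : complexity 2 (2 ^ m₁) ≤ m₁ := Nat.sInf_le hmem
    have hinf := Nat.sInf_mem hne
    have hb : 2 ^ m₁ ≤ 2 ^ (complexity 2 (2 ^ m₁)) := canRepr_le hinf
    have := (Nat.pow_le_pow_iff_right (by norm_num : 1 < 2)).mp hb
    omega
  · -- representation: 2^(m₂-1) * (2^(m₁-m₂+1) + 2)
    have hrep : CanRepr 2 (2 ^ m₁ + 2 ^ m₂) (m₁ + 1) := by
      have h1 : CanRepr 2 (2 ^ (m₁ - m₂ + 1) + 2) (m₁ - m₂ + 1 + 1) :=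
        CanRepr.add (canRepr_pow (by omega)) CanRepr.base
      have h2 := canRepr_mul_pow (m₂ - 1) h1
      have hval : 2 ^ (m₂ - 1) * (2 ^ (m₁ - m₂ + 1) + 2) = 2 ^ m₁ + 2 ^ m₂ := by
        rw [Nat.mul_add]
        rw [← pow_add]
        have e1 : m₂ - 1 + (m₁ - m₂ + 1) = m₁ := by omega
        have e2 : 2 ^ (m₂ - 1) * 2 = 2 ^ m₂ := by
          rw [← pow_succ]; congr 1; omega
        rw [e1, e2]
      have hcnt : m₂ - 1 + (m₁ - m₂ + 1 + 1) = m₁ + 1 := by omega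
      rw [hval, hcnt] at h2
      exact h2
    have hne : {m | CanRepr 2 (2 ^ m₁ + 2 ^ m₂) m}.Nonempty := ⟨m₁ + 1, hrep⟩
    have hle : complexity 2 (2 ^ m₁ + 2 ^ m₂) ≤ m₁ + 1 := Nat.sInf_le hrep
    have hinf := Nat.sInf_mem hne
    have hb : 2 ^ m₁ + 2 ^ m₂ ≤ 2 ^ (complexity 2 (2 ^ m₁ + 2 ^ m₂)) := canRepr_le hinf
    have hlt : 2 ^ m₁ < 2 ^ (complexity 2 (2 ^ m₁ + 2 ^ m₂)) := by
      have : 0 < 2 ^ m₂ := Nat.pow_pos (by norm_num)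
      omega
    have := (Nat.pow_lt_pow_iff_right (by norm_num : 1 < 2)).mp hlt
    omega
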